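/- Let Z be a closed subspace of a complex Hilbert space H. Then the topological space G^Z := {P : P is an orthogonal projection on H and range(P) ∔ Z = H}, with the topology inherited from the operator norm on B(H), is contractible. -/

import Mathlib

noncomputable section

open ContinuousLinearMap Submodule
open scoped InnerProductSpace

set_option linter.unusedSectionVars false

/-- `P` is an orthogonal projection: idempotent and self-adjoint. -/
def IsOrthProjection {H : Type*} [NormedAddCommGroup H] [InnerProductSpace ℂ H]
    [CompleteSpace H] (P : H →L[ℂ] H) : Prop :=
  P ∘L P = P ∧ IsSelfAdjoint P

namespace ContractAux

variable {H : Type*} [NormedAddCommGroup H] [InnerProductSpace ℂ H] [CompleteSpace H]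

lemma sa_inner {T : H →L[ℂ] H} (hT : IsSelfAdjoint T) (x y : H) :
    ⟪T x, y⟫_ℂ = ⟪x, T y⟫_ℂ := by
  conv_lhs => rw [← hT.adjoint_eq]
  exact ContinuousLinearMap.adjoint_inner_left T y x

lemma idem_apply {P : H →L[ℂ] H} (hP : P ∘L P = P) (x : H) : P (P x) = P x := by
  conv_rhs => rw [← hP]
  rfl

lemma idem_fix {P : H →L[ℂ] H} (hP : P ∘L P = P) {x : H}
    (hx : x ∈ LinearMap.range (P : H →ₗ[ℂ] H)) : P x = x := by
  obtain ⟨y, rfl⟩ := hx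
  exact idem_apply hP y

lemma orth_apply_zero {P : H →L[ℂ] H} (hP : IsOrthProjection P) {x : H}
    (hx : x ∈ (LinearMap.range (P : H →ₗ[ℂ] H))ᗮ) : P x = 0 := by
  rw [← inner_self_eq_zero (𝕜 := ℂ)]
  have h1 : ⟪P x, P x⟫_ℂ = ⟪x, P (P x)⟫_ℂ := sa_inner hP.2 x (P x)
  rw [h1, idem_apply hP.1]
  exact (Submodule.mem_orthogonal' _ x).mp hx (P x) ⟨x, rfl⟩

lemma orth_proj_unique {P P' : H →L[ℂ] H} (hP : IsOrthProjection P)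
    (hP' : IsOrthProjection P') (h : LinearMap.range (P : H →ₗ[ℂ] H) = LinearMap.range (P' : H →ₗ[ℂ] H)) : P = P' := by
  have h1 : P' * P = P := by
    ext x
    exact idem_fix hP'.1 (h ▸ ⟨x, rfl⟩)
  have h2 := congrArg star h1
  rw [star_mul, hP.2, hP'.2] at h2
  have h3 : P * P' = P' := by
    ext x
    exact idem_fix hP.1 (h.symm ▸ ⟨x, rfl⟩)
  rw [← h3, h2]

end ContractAux

section Dunit

variable {H : Type*} [NormedAddCommGroup H] [InnerProductSpace ℂ H] [CompleteSpace H]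

namespace ContractAux

lemma isUnit_of_lowbound_sa {D : H →L[ℂ] H} (hDsa : IsSelfAdjoint D)
    (hlow : ∀ x : H, ‖x‖ ≤ ‖D x‖) : IsUnit D := by
  have hker : LinearMap.ker (D : H →ₗ[ℂ] H) = ⊥ := by
    simp only [LinearMap.ker_eq_bot', ContinuousLinearMap.coe_coe]
    intro m hm
    have := hlow m
    rw [hm, norm_zero] at this
    exact norm_le_zero_iff.mp this
  have hanti : AntilipschitzWith 1 D := by
    apply D.antilipschitz_of_bound
    intro x; simpa using hlow x
  have hclosed : IsClosed ((LinearMap.range (D : H →ₗ[ℂ] H) : Submodule ℂ H) : Set H) := by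
    rw [LinearMap.coe_range]
    exact hanti.isClosed_range D.uniformContinuous
  haveI : CompleteSpace (LinearMap.range (D : H →ₗ[ℂ] H)) := hclosed.completeSpace_coe
  have hbot : (LinearMap.range (D : H →ₗ[ℂ] H))ᗮ = ⊥ := by
    rw [Submodule.eq_bot_iff]
    intro w hw
    have hDw : D w = 0 := by
      rw [← inner_self_eq_zero (𝕜 := ℂ)]
      have := (Submodule.mem_orthogonal _ w).mp hw (D (D w)) ⟨D w, rfl⟩
      rwa [sa_inner hDsa (D w) w] at this
    have := hlow w
    rw [hDw, norm_zero] at this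
    exact norm_le_zero_iff.mp this
  have htop : LinearMap.range (D : H →ₗ[ℂ] H) = ⊤ := Submodule.orthogonal_eq_bot_iff.mp hbot
  let e := ContinuousLinearEquiv.ofBijective D hker htop
  refine ⟨⟨D, e.symm.toContinuousLinearMap, ?_, ?_⟩, rfl⟩
  · ext x
    have : D (e.symm x) = e (e.symm x) := rfl
    simp [ContinuousLinearMap.mul_apply, this]
  · ext x
    have : D x = e x := rfl
    simp [ContinuousLinearMap.mul_apply, this]

lemma isUnit_D {E : H →L[ℂ] H} (hE : E * E = E) :
    IsUnit (E + star E - 1) ∧ IsSelfAdjoint (E + star E - 1) := by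
  set D := E + star E - 1 with hD
  have hE' : star E * star E = star E := by
    have := congrArg star hE; rwa [star_mul] at this
  have hDsa : IsSelfAdjoint D := by
    simp [IsSelfAdjoint, hD, star_sub, star_add, star_star, add_comm]
  have hDD : D * D = 1 + (E - star E) * star (E - star E) := by
    simp only [hD, star_sub, star_star, mul_sub, sub_mul, mul_add, add_mul, mul_one, one_mul,
      hE, hE']
    abel
  refine ⟨isUnit_of_lowbound_sa hDsa ?_, hDsa⟩
  intro x
  set B := star (E - star E) with hB
  have h2 : D (D x) = x + (E - star E) (B x) := by
    have := congrArg (fun (T : H →L[ℂ] H) => T x) hDD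
    simpa [ContinuousLinearMap.mul_apply] using this
  have h1 : ⟪D x, D x⟫_ℂ = ⟪x, x⟫_ℂ + ⟪B x, B x⟫_ℂ := by
    rw [sa_inner hDsa x (D x), h2, inner_add_right]
    congr 1
    rw [hB, star_eq_adjoint]
    exact (ContinuousLinearMap.adjoint_inner_left _ _ _).symm
  rw [inner_self_eq_norm_sq_to_K, inner_self_eq_norm_sq_to_K, inner_self_eq_norm_sq_to_K] at h1
  have h4 : ‖D x‖ ^ 2 = ‖x‖ ^ 2 + ‖B x‖ ^ 2 := by exact_mod_cast h1
  nlinarith [norm_nonneg (D x), norm_nonneg x, norm_nonneg (B x)]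

end ContractAux
end Dunit

namespace ContractAux

variable {H : Type*} [NormedAddCommGroup H] [InnerProductSpace ℂ H] [CompleteSpace H]

lemma isCompl_idem {E : H →L[ℂ] H} (hE : E ∘L E = E) :
    IsCompl (LinearMap.range (E : H →ₗ[ℂ] H)) (LinearMap.ker (E : H →ₗ[ℂ] H)) := by
  constructor
  · rw [Submodule.disjoint_def]
    intro x hx hk
    rw [LinearMap.mem_ker, ContinuousLinearMap.coe_coe] at hk
    rw [← idem_fix hE hx, hk]
  · rw [codisjoint_iff, Submodule.eq_top_iff']
    intro x
    apply Submodule.mem_sup.mpr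
    refine ⟨E x, ⟨x, rfl⟩, x - E x, ?_, by abel⟩
    rw [LinearMap.mem_ker, ContinuousLinearMap.coe_coe, map_sub, idem_apply hE, sub_self]

lemma g_spec {Z : Submodule ℂ H} {E : H →L[ℂ] H} (hE : E ∘L E = E)
    (hker : LinearMap.ker (E : H →ₗ[ℂ] H) = Z) :
    IsOrthProjection (E * Ring.inverse (E + star E - 1)) ∧
    LinearMap.range (((E * Ring.inverse (E + star E - 1)) : H →L[ℂ] H) : H →ₗ[ℂ] H) = LinearMap.range (E : H →ₗ[ℂ] H) ∧
    IsCompl (LinearMap.range (((E * Ring.inverse (E + star E - 1)) : H →L[ℂ] H) : H →ₗ[ℂ] H)) Z := by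
  have hE' : E * E = E := hE
  have hE'' : star E * star E = star E := by
    have := congrArg star hE'; rwa [star_mul] at this
  obtain ⟨hu, hsa⟩ := isUnit_D hE'
  obtain ⟨u, huv⟩ := hu
  have hinv : Ring.inverse (E + star E - 1) = (↑u⁻¹ : H →L[ℂ] H) := by
    rw [← huv, Ring.inverse_unit]
  rw [hinv]
  have hEu : E * ↑u = ↑u * star E := by
    rw [huv]
    simp only [mul_add, mul_sub, add_mul, sub_mul, mul_one, one_mul, hE', hE'']
    abel
  have hsEu : star E * ↑u = ↑u * E := by
    rw [huv]
    simp only [mul_add, mul_sub, add_mul, sub_mul, mul_one, one_mul, hE', hE'']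
    abel
  have hEstar : E * ↑u = E * star E := by
    rw [huv]
    simp only [mul_add, mul_sub, mul_one, hE']
    abel
  have unit_conj : ∀ {a b : H →L[ℂ] H}, a * ↑u = ↑u * b → (↑u⁻¹ : H →L[ℂ] H) * a = b * ↑u⁻¹ := by
    intro a b h
    have := congrArg (fun x => (↑u⁻¹ : H →L[ℂ] H) * x * ↑u⁻¹) h
    simpa only [mul_assoc, Units.mul_inv, Units.inv_mul_cancel_left, mul_one] using this
  have h5 : (↑u⁻¹ : H →L[ℂ] H) * E = star E * ↑u⁻¹ := unit_conj hEu
  have h6 : (↑u⁻¹ : H →L[ℂ] H) * star E = E * ↑u⁻¹ := unit_conj hsEu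
  have hstaru : star (↑u⁻¹ : H →L[ℂ] H) = ↑u⁻¹ := by
    have hsu : star (↑u : H →L[ℂ] H) = ↑u := by rw [huv]; exact hsa
    have h7 : star (↑u⁻¹ : H →L[ℂ] H) * ↑u = 1 := by
      conv_lhs => rw [← hsu]
      rw [← star_mul, Units.mul_inv, star_one]
    exact (Units.inv_eq_of_mul_eq_one_left h7).symm
  have hpsi_sa : IsSelfAdjoint (E * (↑u⁻¹ : H →L[ℂ] H)) := by
    show star _ = _
    rw [star_mul, hstaru, h6]
  have hpsi_idem : (E * (↑u⁻¹ : H →L[ℂ] H)) * (E * ↑u⁻¹) = E * ↑u⁻¹ := by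
    calc (E * (↑u⁻¹ : H →L[ℂ] H)) * (E * ↑u⁻¹) = E * (↑u⁻¹ * E) * ↑u⁻¹ := by
          simp only [mul_assoc]
      _ = E * ↑u * (↑u⁻¹ * ↑u⁻¹) := by rw [h5, ← mul_assoc, ← hEstar]; simp only [mul_assoc]
      _ = E * ↑u⁻¹ := by
          simp only [← mul_assoc]
          rw [Units.mul_inv_cancel_right]
  have hrange : LinearMap.range (((E * (↑u⁻¹ : H →L[ℂ] H)) : H →L[ℂ] H) : H →ₗ[ℂ] H) = LinearMap.range (E : H →ₗ[ℂ] H) := by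
    apply le_antisymm
    · rintro x ⟨y, rfl⟩
      exact ⟨(↑u⁻¹ : H →L[ℂ] H) y, rfl⟩
    · have hpsiE : (E * (↑u⁻¹ : H →L[ℂ] H)) * E = E := by
        calc (E * (↑u⁻¹ : H →L[ℂ] H)) * E = E * (↑u⁻¹ * E) := by rw [mul_assoc]
          _ = E * ↑u * ↑u⁻¹ := by rw [h5, ← mul_assoc, ← hEstar]
          _ = E := Units.mul_inv_cancel_right _ _
      rintro x ⟨y, rfl⟩
      refine ⟨E y, ?_⟩
      conv_rhs => rw [← hpsiE]
      rfl
  refine ⟨⟨hpsi_idem, hpsi_sa⟩, hrange, ?_⟩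
  rw [hrange, ← hker]
  exact isCompl_idem hE

end ContractAux

namespace ContractAux

variable {H : Type*} [NormedAddCommGroup H] [InnerProductSpace ℂ H] [CompleteSpace H]

/-- Orthogonal projection onto a complete subspace, as an endomorphism. -/
def Qop (Z : Submodule ℂ H) [CompleteSpace Z] : H →L[ℂ] H :=
  Z.subtypeL ∘L orthogonalProjection Z

variable (Z : Submodule ℂ H) [CompleteSpace Z]

lemma Qop_mem (x : H) : Qop Z x ∈ Z := (orthogonalProjection Z x).2

lemma Qop_fix {z : H} (hz : z ∈ Z) : Qop Z z = z := starProjection_eq_self_iff.mpr hz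

lemma Qop_zero {w : H} (hw : w ∈ Zᗮ) : Qop Z w = 0 := by
  have := orthogonalProjectionOnto_apply_of_mem_orthogonal hw
  simp only [Qop, ContinuousLinearMap.comp_apply, this, Submodule.subtypeL_apply,
    ZeroMemClass.coe_zero]

lemma Qop_sa : IsSelfAdjoint (Qop Z) := isSelfAdjoint_starProjection Z

lemma Qop_idem : Qop Z ∘L Qop Z = Qop Z := by
  ext x
  exact Qop_fix Z (Qop_mem Z x)

lemma Qop_orthProj : IsOrthProjection (Qop Z) := ⟨Qop_idem Z, Qop_sa Z⟩

lemma isUnit_of_ker_top {D : H →L[ℂ] H} (hker : LinearMap.ker (D : H →ₗ[ℂ] H) = ⊥)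
    (htop : LinearMap.range (D : H →ₗ[ℂ] H) = ⊤) : IsUnit D := by
  let e := ContinuousLinearEquiv.ofBijective D hker htop
  refine ⟨⟨D, e.symm.toContinuousLinearMap, ?_, ?_⟩, rfl⟩
  · ext x
    have : D (e.symm x) = e (e.symm x) := rfl
    simp [ContinuousLinearMap.mul_apply, this]
  · ext x
    have : D x = e x := rfl
    simp [ContinuousLinearMap.mul_apply, this]

/-- The continuous projection onto `M` along `Z`, for complementary complete subspaces. -/
lemma exists_proj {M : Submodule ℂ H} [CompleteSpace M] (hc : IsCompl M Z) :
    ∃ F : H →L[ℂ] H, (∀ x, F x ∈ M) ∧ (∀ r ∈ M, F r = r) ∧ (∀ z ∈ Z, F z = 0) ∧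
      (∀ x, x - F x ∈ Z) := by
  let T : (M × Z) →L[ℂ] H := M.subtypeL.coprod Z.subtypeL
  have hT : ∀ p : M × Z, T p = (p.1 : H) + (p.2 : H) := fun p => rfl
  have hker : LinearMap.ker (T : (M × Z) →ₗ[ℂ] H) = ⊥ := by
    simp only [LinearMap.ker_eq_bot', ContinuousLinearMap.coe_coe]
    rintro ⟨a, b⟩ hab
    rw [hT] at hab
    have ha : (a : H) ∈ M ⊓ Z := by
      constructor
      · exact a.2
      · rw [add_eq_zero_iff_eq_neg.mp hab]
        exact Z.neg_mem b.2
    rw [hc.inf_eq_bot] at ha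
    have ha0 : (a : H) = 0 := ha
    rw [ha0, zero_add] at hab
    have hb : b = 0 := Subtype.ext hab
    have ha' : a = 0 := Subtype.ext ha0
    rw [ha', hb]
    rfl
  have htop : LinearMap.range (T : (M × Z) →ₗ[ℂ] H) = ⊤ := by
    rw [Submodule.eq_top_iff']
    intro x
    have hx : x ∈ M ⊔ Z := by rw [hc.sup_eq_top]; trivial
    obtain ⟨y, hy, z, hz, rfl⟩ := Submodule.mem_sup.mp hx
    exact ⟨(⟨y, hy⟩, ⟨z, hz⟩), rfl⟩
  let e := ContinuousLinearEquiv.ofBijective T hker htop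
  refine ⟨M.subtypeL ∘L (ContinuousLinearMap.fst ℂ M Z) ∘L e.symm.toContinuousLinearMap,
    fun x => (e.symm x).1.2, ?_, ?_, ?_⟩
  · intro r hr
    have h1 : e.symm r = (⟨r, hr⟩, 0) := by
      apply e.injective
      rw [e.apply_symm_apply]
      show r = T _
      rw [hT]
      simp
    simp [h1]
  · intro z hz
    have h1 : e.symm z = (0, ⟨z, hz⟩) := by
      apply e.injective
      rw [e.apply_symm_apply]
      show z = T _
      rw [hT]
      simp
    simp [h1]
  · intro x
    have h1 : x = ((e.symm x).1 : H) + ((e.symm x).2 : H) := by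
      conv_lhs => rw [← e.apply_symm_apply x]
      exact hT _
    have h2 : x - ((e.symm x).1 : H) = ((e.symm x).2 : H) := sub_eq_iff_eq_add'.mpr h1
    show x - ((e.symm x).1 : H) ∈ Z
    rw [h2]
    exact (e.symm x).2.2

end ContractAux

namespace ContractAux

variable {H : Type*} [NormedAddCommGroup H] [InnerProductSpace ℂ H] [CompleteSpace H]

lemma range_closed_of_idem {P : H →L[ℂ] H} (hP : P ∘L P = P) :
    IsClosed ((LinearMap.range (P : H →ₗ[ℂ] H) : Submodule ℂ H) : Set H) := by
  have h : LinearMap.range (P : H →ₗ[ℂ] H) = LinearMap.ker (((1 - P) : H →L[ℂ] H) : H →ₗ[ℂ] H) := by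
    ext x
    constructor
    · intro hx
      rw [LinearMap.mem_ker, ContinuousLinearMap.coe_coe, ContinuousLinearMap.sub_apply, ContinuousLinearMap.one_apply,
        idem_fix hP hx, sub_self]
    · intro hx
      rw [LinearMap.mem_ker, ContinuousLinearMap.coe_coe, ContinuousLinearMap.sub_apply, ContinuousLinearMap.one_apply,
        sub_eq_zero] at hx
      exact ⟨x, hx.symm⟩
  rw [h]
  exact ContinuousLinearMap.isClosed_ker _

variable (Z : Submodule ℂ H) [CompleteSpace Z]

lemma f_spec {P : H →L[ℂ] H} (hP : IsOrthProjection P)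
    (hc : IsCompl (LinearMap.range (P : H →ₗ[ℂ] H)) Z) :
    IsUnit (1 - P * Qop Z) ∧
      ((Ring.inverse (1 - P * Qop Z) * (P * (1 - Qop Z))) ∘L
          (Ring.inverse (1 - P * Qop Z) * (P * (1 - Qop Z)))
        = Ring.inverse (1 - P * Qop Z) * (P * (1 - Qop Z))) ∧
      LinearMap.ker (((Ring.inverse (1 - P * Qop Z) * (P * (1 - Qop Z))) : H →L[ℂ] H) : H →ₗ[ℂ] H) = Z ∧
      LinearMap.range (((Ring.inverse (1 - P * Qop Z) * (P * (1 - Qop Z))) : H →L[ℂ] H) : H →ₗ[ℂ] H) = LinearMap.range (P : H →ₗ[ℂ] H) := by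
  haveI : CompleteSpace (LinearMap.range (P : H →ₗ[ℂ] H)) := (range_closed_of_idem hP.1).completeSpace_coe
  obtain ⟨F, hF1, hF2, hF3, hF4⟩ := exists_proj Z hc
  have happ : ∀ x : H, (1 - P * Qop Z) x = x - P (Qop Z x) := by
    intro x
    simp [ContinuousLinearMap.sub_apply, ContinuousLinearMap.mul_apply,
      ContinuousLinearMap.one_apply]
  -- injectivity of N = 1 - P Q
  have hker : LinearMap.ker (((1 - P * Qop Z) : H →L[ℂ] H) : H →ₗ[ℂ] H) = ⊥ := by
    simp only [LinearMap.ker_eq_bot', ContinuousLinearMap.coe_coe]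
    intro x hx
    rw [happ x, sub_eq_zero] at hx
    -- hx : x = P (Qop Z x)
    have hxP : x ∈ LinearMap.range (P : H →ₗ[ℂ] H) := ⟨Qop Z x, hx.symm⟩
    have hz : Qop Z x ∈ Z := Qop_mem Z x
    have hPx : P x = x := idem_fix hP.1 hxP
    have hQz : Qop Z (Qop Z x) = Qop Z x := Qop_fix Z hz
    have key1 : P (x - Qop Z x) = 0 := by rw [map_sub, hPx, ← hx, sub_self]
    have key2 : Qop Z (x - Qop Z x) = 0 := by rw [map_sub, hQz, sub_self]
    have inner1 : ⟪x - Qop Z x, x⟫_ℂ = 0 := by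
      have h := sa_inner hP.2 (x - Qop Z x) x
      rw [key1, inner_zero_left, hPx] at h
      exact h.symm
    have inner2 : ⟪x - Qop Z x, Qop Z x⟫_ℂ = 0 := by
      have h := sa_inner (Qop_sa Z) (x - Qop Z x) (Qop Z x)
      rw [key2, inner_zero_left, hQz] at h
      exact h.symm
    have hxz : x = Qop Z x := by
      have h0 : ⟪x - Qop Z x, x - Qop Z x⟫_ℂ = 0 := by
        rw [inner_sub_right, inner1, inner2, sub_zero]
      rw [← sub_eq_zero]
      exact inner_self_eq_zero.mp h0
    exact Submodule.disjoint_def.mp hc.disjoint x hxP (hxz ▸ hz)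
  -- surjectivity of N
  have hGZ : ∀ y : H, star F y ∈ Zᗮ := by
    intro y
    rw [Submodule.mem_orthogonal']
    intro u hu
    rw [star_eq_adjoint, ContinuousLinearMap.adjoint_inner_left, hF3 u hu, inner_zero_right]
  have hGP : ∀ y : H, y - star F y ∈ (LinearMap.range (P : H →ₗ[ℂ] H))ᗮ := by
    intro y
    rw [Submodule.mem_orthogonal']
    intro u hu
    rw [inner_sub_left, star_eq_adjoint, ContinuousLinearMap.adjoint_inner_left, hF2 u hu,
      sub_self]
  have htop : LinearMap.range (((1 - P * Qop Z) : H →L[ℂ] H) : H →ₗ[ℂ] H) = ⊤ := by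
    rw [Submodule.eq_top_iff']
    intro y
    set b := F y + P (y - F y) with hbdef
    have hbP : b ∈ LinearMap.range (P : H →ₗ[ℂ] H) := by
      apply Submodule.add_mem
      · exact hF1 y
      · exact ⟨y - F y, rfl⟩
    set w := star F b with hwdef
    have hPw : P w = b := by
      have h1 : P (b - w) = 0 := orth_apply_zero hP (hGP b)
      rw [map_sub] at h1
      rw [sub_eq_zero] at h1
      rw [← h1, idem_fix hP.1 hbP]
    set a := F w with hadef
    have haP : a ∈ LinearMap.range (P : H →ₗ[ℂ] H) := hF1 w
    have hQa : Qop Z a = a - w := by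
      have h1 : Qop Z w = 0 := Qop_zero Z (hGZ b)
      have h2 : Qop Z (w - a) = w - a := Qop_fix Z (hF4 w)
      have h3 : Qop Z a = Qop Z w - Qop Z (w - a) := by rw [← map_sub]; congr 1; abel
      rw [h3, h1, h2]
      abel
    refine ⟨a + (y - F y), ?_⟩
    rw [ContinuousLinearMap.coe_coe, happ]
    have hQx : Qop Z (a + (y - F y)) = (a - w) + (y - F y) := by
      rw [map_add, hQa, Qop_fix Z (hF4 y)]
    rw [hQx, map_add, map_sub, idem_fix hP.1 haP, hPw, hbdef]
    abel
  have hNu : IsUnit (1 - P * Qop Z) := isUnit_of_ker_top hker htop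
  -- identify E with F
  have hNF : (1 - P * Qop Z) * F = P * (1 - Qop Z) := by
    ext x
    rw [ContinuousLinearMap.mul_apply, ContinuousLinearMap.mul_apply, happ]
    have hxdec : x = F x + (x - F x) := by abel
    have h1 : P x = F x + P (x - F x) := by
      conv_lhs => rw [hxdec]
      rw [map_add, idem_fix hP.1 (hF1 x)]
    have h2 : Qop Z x = Qop Z (F x) + (x - F x) := by
      conv_lhs => rw [hxdec]
      rw [map_add, Qop_fix Z (hF4 x)]
    have h3 : (1 - Qop Z) x = x - Qop Z x := by
      simp [ContinuousLinearMap.sub_apply, ContinuousLinearMap.one_apply]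
    rw [h3, map_sub, h1, h2, map_add]
    abel
  have hEF : Ring.inverse (1 - P * Qop Z) * (P * (1 - Qop Z)) = F := by
    obtain ⟨un, hun⟩ := hNu
    rw [← hun, Ring.inverse_unit, ← hNF, ← hun, ← mul_assoc, Units.inv_mul, one_mul]
  rw [hEF]
  refine ⟨hNu, ?_, ?_, ?_⟩
  · ext x
    exact hF2 (F x) (hF1 x)
  · ext x
    rw [LinearMap.mem_ker, ContinuousLinearMap.coe_coe]
    constructor
    · intro hx
      have := hF4 x
      rwa [hx, sub_zero] at this
    · intro hx
      exact hF3 x hx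
  · apply le_antisymm
    · rintro x ⟨y, rfl⟩
      exact hF1 y
    · intro r hr
      exact ⟨r, hF2 r hr⟩

end ContractAux

namespace ContractAux

set_option synthInstance.maxHeartbeats 1000000

variable {H : Type*} [NormedAddCommGroup H] [InnerProductSpace ℂ H] [CompleteSpace H]
variable (Z : Submodule ℂ H) [CompleteSpace Z]

lemma convex_Y : Convex ℝ {E : H →L[ℂ] H | E ∘L E = E ∧ LinearMap.ker (E : H →ₗ[ℂ] H) = Z} := by
  rintro E ⟨hEi, hEk⟩ F ⟨hFi, hFk⟩ t s ht hs hts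
  have hEi' : E * E = E := hEi
  have hFi' : F * F = F := hFi
  have hEF : E * F = E := by
    ext x
    rw [ContinuousLinearMap.mul_apply]
    have h1 : x - F x ∈ LinearMap.ker (F : H →ₗ[ℂ] H) := by
      rw [LinearMap.mem_ker, ContinuousLinearMap.coe_coe, map_sub, idem_apply hFi, sub_self]
    rw [hFk, ← hEk, LinearMap.mem_ker, ContinuousLinearMap.coe_coe] at h1
    have h2 : E (F x) = E x - E (x - F x) := by rw [← map_sub]; congr 1; abel
    rw [h2, h1, sub_zero]
  have hFE : F * E = F := by
    ext x
    rw [ContinuousLinearMap.mul_apply]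
    have h1 : x - E x ∈ LinearMap.ker (E : H →ₗ[ℂ] H) := by
      rw [LinearMap.mem_ker, ContinuousLinearMap.coe_coe, map_sub, idem_apply hEi, sub_self]
    rw [hEk, ← hFk, LinearMap.mem_ker, ContinuousLinearMap.coe_coe] at h1
    have h2 : F (E x) = F x - F (x - E x) := by rw [← map_sub]; congr 1; abel
    rw [h2, h1, sub_zero]
  constructor
  · show (t • E + s • F) * (t • E + s • F) = t • E + s • F
    have expand : (t • E + s • F) * (t • E + s • F)
        = (t*t) • (E*E) + (t*s) • (F*E) + (s*t) • (E*F) + (s*s) • (F*F) := by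
      simp only [add_mul, mul_add, smul_add, smul_mul_assoc, mul_smul_comm, smul_smul]
      abel
    rw [expand, hEi', hFi', hEF, hFE]
    have h3 : (t*t) • E + (t*s) • F + (s*t) • E + (s*s) • F
        = (t*t + s*t) • E + (t*s + s*s) • F := by
      rw [add_smul, add_smul]; abel
    rw [h3, show t*t + s*t = t by rw [← add_mul, hts, one_mul],
      show t*s + s*s = s by rw [← add_mul, hts, one_mul]]
  · ext x
    rw [LinearMap.mem_ker, ContinuousLinearMap.coe_coe]
    constructor
    · intro hx
      have hEFx : E (F x) = E x := by
        have := congrArg (fun (T : H →L[ℂ] H) => T x) hEF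
        simpa [ContinuousLinearMap.mul_apply] using this
      have h1 := congrArg E hx
      rw [map_zero, ContinuousLinearMap.add_apply, ContinuousLinearMap.smul_apply,
        ContinuousLinearMap.smul_apply, map_add, map_smul_of_tower, map_smul_of_tower,
        idem_apply hEi, hEFx, ← add_smul, hts, one_smul] at h1
      rw [← hEk]
      exact LinearMap.mem_ker.mpr h1
    · intro hx
      have hE0 : E x = 0 := by rw [← hEk, LinearMap.mem_ker, ContinuousLinearMap.coe_coe] at hx; exact hx
      have hF0 : F x = 0 := by rw [← hFk, LinearMap.mem_ker, ContinuousLinearMap.coe_coe] at hx; exact hx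
      rw [ContinuousLinearMap.add_apply, ContinuousLinearMap.smul_apply,
        ContinuousLinearMap.smul_apply, hE0, hF0, smul_zero, smul_zero, add_zero]

lemma oneSubQ_mem : (1 - Qop Z) ∈ {E : H →L[ℂ] H | E ∘L E = E ∧ LinearMap.ker (E : H →ₗ[ℂ] H) = Z} := by
  constructor
  · show (1 - Qop Z) * (1 - Qop Z) = 1 - Qop Z
    have hQQ : Qop Z * Qop Z = Qop Z := Qop_idem Z
    simp only [mul_sub, sub_mul, mul_one, one_mul, hQQ]
    abel
  · ext x
    rw [LinearMap.mem_ker, ContinuousLinearMap.coe_coe, ContinuousLinearMap.sub_apply, ContinuousLinearMap.one_apply,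
      sub_eq_zero]
    constructor
    · intro hx
      rw [hx]
      exact Qop_mem Z x
    · intro hx
      exact (Qop_fix Z hx).symm

end ContractAux
open ContractAux

/-- For a closed subspace `Z` of a complex Hilbert space `H`, the space
`G^Z = {P orthogonal projection : range P ∔ Z = H}`, with the operator-norm
topology, is contractible. -/
theorem contractible_complementary_projections {H : Type*} [NormedAddCommGroup H]
    [InnerProductSpace ℂ H] [CompleteSpace H]
    (Z : Submodule ℂ H) (hZ : IsClosed (Z : Set H)) :
    ContractibleSpace {P : H →L[ℂ] H //
      IsOrthProjection P ∧ IsCompl (LinearMap.range (P : H →ₗ[ℂ] H)) Z} := by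
  haveI : CompleteSpace Z := hZ.completeSpace_coe
  let X := {P : H →L[ℂ] H // IsOrthProjection P ∧ IsCompl (LinearMap.range (P : H →ₗ[ℂ] H)) Z}
  show ContractibleSpace X
  let s : Set (H →L[ℂ] H) := {E | E ∘L E = E ∧ LinearMap.ker (E : H →ₗ[ℂ] H) = Z}
  haveI hYc : ContractibleSpace s :=
    (convex_Y Z).contractibleSpace ⟨1 - Qop Z, oneSubQ_mem Z⟩
  have fprop : ∀ P : X,
      Ring.inverse (1 - P.1 * Qop Z) * (P.1 * (1 - Qop Z)) ∈ s := by
    intro P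
    obtain ⟨-, h1, h2, -⟩ := f_spec Z P.2.1 P.2.2
    exact ⟨h1, h2⟩
  have fcont : Continuous (fun P : X =>
      (⟨Ring.inverse (1 - P.1 * Qop Z) * (P.1 * (1 - Qop Z)), fprop P⟩ : s)) := by
    refine Continuous.subtype_mk ?_ _
    have h1 : Continuous fun P : X => 1 - P.1 * Qop Z :=
      continuous_const.sub (continuous_subtype_val.mul continuous_const)
    have h2 : Continuous fun P : X => P.1 * (1 - Qop Z) :=
      continuous_subtype_val.mul continuous_const
    rw [continuous_iff_continuousAt]
    intro P
    refine ContinuousAt.mul ?_ h2.continuousAt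
    obtain ⟨u, hu⟩ := (f_spec Z P.2.1 P.2.2).1
    have hc : ContinuousAt Ring.inverse (1 - P.1 * Qop Z) :=
      hu ▸ NormedRing.inverse_continuousAt u
    exact ContinuousAt.comp (g := Ring.inverse) hc h1.continuousAt
  have gprop : ∀ E : s, IsOrthProjection (E.1 * Ring.inverse (E.1 + star E.1 - 1)) ∧
      IsCompl (LinearMap.range (((E.1 * Ring.inverse (E.1 + star E.1 - 1)) : H →L[ℂ] H) : H →ₗ[ℂ] H)) Z := by
    intro E
    obtain ⟨h1, -, h3⟩ := g_spec E.2.1 E.2.2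
    exact ⟨h1, h3⟩
  have gcont : Continuous (fun E : s =>
      (⟨E.1 * Ring.inverse (E.1 + star E.1 - 1), gprop E⟩ : X)) := by
    refine Continuous.subtype_mk ?_ _
    rw [continuous_iff_continuousAt]
    intro E
    refine ContinuousAt.mul continuous_subtype_val.continuousAt ?_
    have h1 : Continuous fun E : s => E.1 + star E.1 - 1 :=
      (continuous_subtype_val.add continuous_subtype_val.star).sub continuous_const
    obtain ⟨u, hu⟩ := (isUnit_D (E.2.1 : E.1 * E.1 = E.1)).1
    have hc : ContinuousAt Ring.inverse (E.1 + star E.1 - 1) :=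
      hu ▸ NormedRing.inverse_continuousAt u
    exact ContinuousAt.comp (g := Ring.inverse) hc h1.continuousAt
  let fm : C(X, s) := ⟨_, fcont⟩
  let gm : C(s, X) := ⟨_, gcont⟩
  have hgf : gm.comp fm = ContinuousMap.id X := by
    refine ContinuousMap.ext fun P => ?_
    apply Subtype.ext
    show (fm P).1 * Ring.inverse ((fm P).1 + star (fm P).1 - 1) = P.1
    obtain ⟨-, hidem, hker, hrange⟩ := f_spec Z P.2.1 P.2.2
    obtain ⟨hpsi, hpsirange, -⟩ := g_spec hidem hker
    exact orth_proj_unique hpsi P.2.1 (hpsirange.trans hrange)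
  rw [contractible_iff_id_nullhomotopic]
  obtain ⟨y0, hy0⟩ := (contractible_iff_id_nullhomotopic s).mp hYc
  have hf_null : fm.Nullhomotopic := by
    refine ⟨y0, ?_⟩
    have h := ContinuousMap.Homotopic.comp hy0 (ContinuousMap.Homotopic.refl fm)
    rwa [ContinuousMap.id_comp, ContinuousMap.const_comp] at h
  have h := hf_null.comp_right gm
  rwa [hgf] at h
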